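/- Let n be a positive integer, let Π be an n × n complex Hermitian positive semidefinite matrix, and let s ≥ 0. Suppose that for every unit vector χ : Fin n → ℝ with χ(i) ≥ 0 for all i, one has ⟨χ, Π χ⟩ ≤ s (viewing χ as a complex vector; the quadratic form is real since Π is Hermitian). Then for every unit vector ψ : Fin n → ℝ (with entries of arbitrary sign), ⟨ψ, Π ψ⟩ ≤ 2s. -/

import Mathlib

open Matrix ComplexOrder

/-- **Real-amplitude soundness** (first part of Proposition
`QMA⁺_{c,s} ⊆ QMA_{c,4s}`). If a Hermitian positive semidefinite matrix `P`
accepts every real nonnegative unit vector with probability at most `s`, then it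
accepts every real unit vector (with entries of arbitrary sign) with probability
at most `2s`. -/
theorem real_amplitude_soundness (n : ℕ) (hn : 0 < n)
    (P : Matrix (Fin n) (Fin n) ℂ)
    (hHerm : P.IsHermitian) (hPSD : P.PosSemidef)
    (s : ℝ) (hs : 0 ≤ s)
    (hbound : ∀ χ : Fin n → ℝ, (∀ i, 0 ≤ χ i) → ∑ i, (χ i) ^ 2 = 1 →
      (star (fun i => (χ i : ℂ)) ⬝ᵥ P.mulVec (fun i => (χ i : ℂ))).re ≤ s) :
    ∀ ψ : Fin n → ℝ, ∑ i, (ψ i) ^ 2 = 1 →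
      (star (fun i => (ψ i : ℂ)) ⬝ᵥ P.mulVec (fun i => (ψ i : ℂ))).re ≤ 2 * s := by
  have hB : ∀ x y : Fin n → ℝ,
      (star (fun i => (x i : ℂ)) ⬝ᵥ P.mulVec (fun i => (y i : ℂ))).re
        = ∑ i, ∑ j, x i * (P i j).re * y j := by
    intro x y
    simp only [dotProduct, mulVec, Pi.star_apply, Complex.star_def, Complex.conj_ofReal,
      Complex.re_sum, Finset.mul_sum, Complex.mul_re, Complex.ofReal_re, Complex.ofReal_im]
    refine Finset.sum_congr rfl fun i _ => Finset.sum_congr rfl fun j _ => by ring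
  set Q : (Fin n → ℝ) → ℝ := fun x => ∑ i, ∑ j, x i * (P i j).re * x j with hQ
  have hpos : ∀ x : Fin n → ℝ, 0 ≤ Q x := by
    intro x
    have h := hPSD.dotProduct_mulVec_nonneg (fun i => (x i : ℂ))
    rw [Complex.le_def] at h
    have h1 := h.1
    rwa [Complex.zero_re, hB] at h1
  have hscale : ∀ χ : Fin n → ℝ, (∀ i, 0 ≤ χ i) → Q χ ≤ (∑ i, (χ i) ^ 2) * s := by
    intro χ hχ
    set t : ℝ := ∑ i, (χ i) ^ 2 with ht
    have ht0 : 0 ≤ t := Finset.sum_nonneg fun i _ => sq_nonneg _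
    rcases eq_or_lt_of_le ht0 with h0 | h0
    · have hz : ∀ i, χ i = 0 := by
        intro i
        have := (Finset.sum_eq_zero_iff_of_nonneg (fun i _ => sq_nonneg (χ i))).mp h0.symm i
          (Finset.mem_univ i)
        exact pow_eq_zero_iff (by norm_num) |>.mp this
      have hQz : Q χ = 0 := by
        refine Finset.sum_eq_zero fun i _ => Finset.sum_eq_zero fun j _ => by simp [hz]
      rw [hQz, ← h0]; simp
    · set r : ℝ := (Real.sqrt t)⁻¹ with hr
      have hrt : Real.sqrt t > 0 := Real.sqrt_pos.mpr h0
      have hr2 : r ^ 2 * t = 1 := by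
        rw [hr]
        rw [show ((Real.sqrt t)⁻¹) ^ 2 = ((Real.sqrt t) ^ 2)⁻¹ by ring,
          Real.sq_sqrt ht0]
        field_simp
      have hnorm : ∑ i, (r * χ i) ^ 2 = 1 := by
        have h2 : ∑ i, (r * χ i) ^ 2 = r ^ 2 * t := by
          rw [ht, Finset.mul_sum]
          exact Finset.sum_congr rfl fun i _ => by ring
        rw [h2, hr2]
      have hb := hbound (fun i => r * χ i) (fun i => mul_nonneg (by positivity) (hχ i)) hnorm
      rw [hB] at hb
      have hQr : ∑ i, ∑ j, (r * χ i) * (P i j).re * (r * χ j) = r ^ 2 * Q χ := by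
        rw [hQ, Finset.mul_sum]
        refine Finset.sum_congr rfl fun i _ => ?_
        rw [Finset.mul_sum]
        exact Finset.sum_congr rfl fun j _ => by ring
      rw [hQr] at hb
      have : t * (r ^ 2 * Q χ) ≤ t * s := by
        exact mul_le_mul_of_nonneg_left hb ht0
      calc Q χ = t * (r ^ 2 * Q χ) := by rw [show t * (r^2 * Q χ) = (r^2 * t) * Q χ by ring, hr2, one_mul]
        _ ≤ t * s := this
  -- main argument
  intro ψ hψ
  rw [hB]
  set a : Fin n → ℝ := fun i => max (ψ i) 0 with haa
  set b : Fin n → ℝ := fun i => max (-ψ i) 0 with hbb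
  have ha0 : ∀ i, 0 ≤ a i := fun i => le_max_right _ _
  have hb0 : ∀ i, 0 ≤ b i := fun i => le_max_right _ _
  have hab : ∀ i, ψ i = a i - b i := by
    intro i
    rcases le_total (ψ i) 0 with h | h
    · simp [haa, hbb, max_eq_right h, max_eq_left (neg_nonneg.mpr h)]
    · simp [haa, hbb, max_eq_left h, max_eq_right (neg_nonpos.mpr h)]
  have hsq : ∀ i, a i ^ 2 + b i ^ 2 = ψ i ^ 2 := by
    intro i
    rcases le_total (ψ i) 0 with h | h
    · simp [haa, hbb, max_eq_right h, max_eq_left (neg_nonneg.mpr h)]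
    · simp [haa, hbb, max_eq_left h, max_eq_right (neg_nonpos.mpr h)]
  have hsum : (∑ i, a i ^ 2) + (∑ i, b i ^ 2) = 1 := by
    rw [← Finset.sum_add_distrib, ← hψ]
    exact Finset.sum_congr rfl fun i _ => hsq i
  -- parallelogram: Q ψ + Q (a+b) = 2 Q a + 2 Q b
  have hpar : (∑ i, ∑ j, ψ i * (P i j).re * ψ j) + Q (fun i => a i + b i)
      = 2 * Q a + 2 * Q b := by
    rw [hQ]
    rw [show (2:ℝ) * (∑ i, ∑ j, a i * (P i j).re * a j) + 2 * (∑ i, ∑ j, b i * (P i j).re * b j)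
      = ∑ i, ∑ j, (2 * (a i * (P i j).re * a j) + 2 * (b i * (P i j).re * b j)) by
        rw [Finset.mul_sum, Finset.mul_sum, ← Finset.sum_add_distrib]
        refine Finset.sum_congr rfl fun i _ => ?_
        rw [Finset.mul_sum, Finset.mul_sum, ← Finset.sum_add_distrib]]
    rw [← Finset.sum_add_distrib]
    refine Finset.sum_congr rfl fun i _ => ?_
    rw [← Finset.sum_add_distrib]
    refine Finset.sum_congr rfl fun j _ => ?_
    rw [hab i, hab j]; ring
  have h1 : Q a ≤ (∑ i, a i ^ 2) * s := hscale a ha0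
  have h2 : Q b ≤ (∑ i, b i ^ 2) * s := hscale b hb0
  have h3 : 0 ≤ Q (fun i => a i + b i) := hpos _
  have := hpar
  nlinarith [h1, h2, h3, hsum]
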